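/- For the Levi-Civita connection ∇̃ of the metric g̃ on ℝ⁴, the covariant derivatives of the frame fields satisfy, at every point: ∇̃_{e₁}e₁ = 0, ∇̃_{e₁}e₂ = (1/2)e₄, ∇̃_{e₁}e₃ = 0, ∇̃_{e₁}e₄ = −(1/2)e₂, ∇̃_{e₂}e₁ = (1/2)e₄, ∇̃_{e₂}e₂ = 0, ∇̃_{e₂}e₃ = (1/2)e₄, ∇̃_{e₂}e₄ = −(1/2)(e₁ + e₃), ∇̃_{e₃}e₁ = 0, ∇̃_{e₃}e₂ = (1/2)e₄, ∇̃_{e₃}e₃ = 0, ∇̃_{e₃}e₄ = −(1/2)e₂, ∇̃_{e₄}e₁ = −(1/2)e₂, ∇̃_{e₄}e₂ = (1/2)(e₁ − e₃), ∇̃_{e₄}e₃ = (1/2)e₂, ∇̃_{e₄}e₄ = 0. -/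

import Mathlib

noncomputable section

/-- The left-invariant frame fields e₁,e₂,e₃,e₄ on ℝ⁴ (coordinates x,y,z,t = p 0,...,p 3). -/
def eVF (i : Fin 4) (p : Fin 4 → ℝ) : Fin 4 → ℝ :=
  ![![1, 0, 0, 0],
    ![p 3, 1, 0, 0],
    ![(p 3) ^ 2 / 2, p 3, 1, 0],
    ![0, 0, 0, 1]] i

/-- The matrix of the metric g̃ at a point with last coordinate t. -/
def gMat (t : ℝ) : Matrix (Fin 4) (Fin 4) ℝ :=
  !![1, -t, t ^ 2 / 2, 0;
     -t, 1 + t ^ 2, -t * (1 + t ^ 2 / 2), 0;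
     t ^ 2 / 2, -t * (1 + t ^ 2 / 2), 1 + t ^ 2 + t ^ 4 / 4, 0;
     0, 0, 0, 1]

/-- The metric g̃ as a bilinear form on each tangent space. -/
def gMet (p X Y : Fin 4 → ℝ) : ℝ :=
  ∑ i, ∑ j, gMat (p 3) i j * X i * Y j

/-- Partial derivative in direction of the i-th coordinate. -/
def pd (i : Fin 4) (f : (Fin 4 → ℝ) → ℝ) (p : Fin 4 → ℝ) : ℝ :=
  deriv (fun s => f (Function.update p i s)) (p i)

/-- The Christoffel symbols Γᵏᵢⱼ of g̃. -/
def Chr (p : Fin 4 → ℝ) (k i j : Fin 4) : ℝ :=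
  (1 / 2) * ∑ l, (gMat (p 3))⁻¹ k l *
    (pd i (fun q => gMat (q 3) j l) p + pd j (fun q => gMat (q 3) i l) p
      - pd l (fun q => gMat (q 3) i j) p)

/-- The Levi-Civita connection of g̃ in coordinates. -/
def nabla (X Y : (Fin 4 → ℝ) → (Fin 4 → ℝ)) (p : Fin 4 → ℝ) : Fin 4 → ℝ :=
  fun k => (∑ i, X p i * pd i (fun q => Y q k) p)
    + ∑ i, ∑ j, Chr p k i j * X p i * Y p j

/-- Lie bracket of vector fields on ℝ⁴. -/
def bracket (X Y : (Fin 4 → ℝ) → (Fin 4 → ℝ)) (p : Fin 4 → ℝ) : Fin 4 → ℝ :=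
  fderiv ℝ Y p (X p) - fderiv ℝ X p (Y p)

/-- The curvature tensor R̃(X,Y)Z = ∇̃_X ∇̃_Y Z − ∇̃_Y ∇̃_X Z − ∇̃_{[X,Y]} Z. -/
def Riem (X Y Z : (Fin 4 → ℝ) → (Fin 4 → ℝ)) (p : Fin 4 → ℝ) : Fin 4 → ℝ :=
  nabla X (nabla Y Z) p - nabla Y (nabla X Z) p - nabla (bracket X Y) Z p


def gInvMat (t : ℝ) : Matrix (Fin 4) (Fin 4) ℝ :=
  !![1 + t^2 + t^4/4, t + t^3/2, t^2/2, 0;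
     t + t^3/2, 1 + t^2, t, 0;
     t^2/2, t, 1, 0;
     0, 0, 0, 1]

lemma gMat_inv (t : ℝ) : (gMat t)⁻¹ = gInvMat t := by
  apply Matrix.inv_eq_right_inv
  ext i j
  fin_cases i <;> fin_cases j <;>
    simp [gMat, gInvMat, Matrix.mul_apply, Fin.sum_univ_four, Matrix.one_apply] <;> ring

def dg (t : ℝ) : Matrix (Fin 4) (Fin 4) ℝ :=
  !![0, -1, t, 0;
     -1, 2*t, -(1 + 3*t^2/2), 0;
     t, -(1 + 3*t^2/2), 2*t + t^3, 0;
     0, 0, 0, 0]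

lemma hd_neg (t : ℝ) : deriv (fun s : ℝ => -s) t = -1 := by
  simpa using (hasDerivAt_id t).neg.deriv

lemma hd_sq2 (t : ℝ) : deriv (fun s : ℝ => s^2/2) t = t := by
  have h := (hasDerivAt_pow 2 t).div_const 2
  rw [h.deriv]; push_cast; ring

lemma hd_one_sq (t : ℝ) : deriv (fun s : ℝ => 1 + s^2) t = 2*t := by
  have h := (hasDerivAt_pow 2 t).const_add 1
  rw [h.deriv]; push_cast; ring

lemma hd_m (t : ℝ) : deriv (fun s : ℝ => -(s*(1+s^2/2))) t = -(1+3*t^2/2) := by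
  have h := ((hasDerivAt_id t).mul (((hasDerivAt_pow 2 t).div_const 2).const_add 1)).neg
  simp only [id] at h
  rw [HasDerivAt.deriv (f := fun s : ℝ => -(s*(1+s^2/2))) h]; push_cast; ring

lemma hd_big (t : ℝ) : deriv (fun s : ℝ => 1 + s^2 + s^4/4) t = 2*t + t^3 := by
  have h := (((hasDerivAt_pow 2 t).const_add 1).add ((hasDerivAt_pow 4 t).div_const 4))
  rw [HasDerivAt.deriv (f := fun s : ℝ => 1 + s^2 + s^4/4) h]; push_cast; ring

lemma deriv_gMat (j l : Fin 4) (t : ℝ) :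
    deriv (fun s => gMat s j l) t = dg t j l := by
  fin_cases j <;> fin_cases l <;>
    simp [gMat, dg, hd_neg, hd_sq2, hd_one_sq, hd_m, hd_big, Matrix.vecHead, Matrix.vecTail]

lemma pd_g (i j l : Fin 4) (p : Fin 4 → ℝ) :
    pd i (fun q => gMat (q 3) j l) p = if i = 3 then dg (p 3) j l else 0 := by
  by_cases h : i = 3
  · subst h
    simp only [pd, if_pos rfl, Function.update_self]
    exact deriv_gMat j l (p 3)
  · rw [if_neg h]
    simp only [pd, Function.update_of_ne (Ne.symm h)]
    exact deriv_const _ _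

lemma Chr_eq (p : Fin 4 → ℝ) (k i j : Fin 4) :
    Chr p k i j = (1 / 2) * ∑ l, gInvMat (p 3) k l *
      ((if i = 3 then dg (p 3) j l else 0) + (if j = 3 then dg (p 3) i l else 0)
        - (if l = 3 then dg (p 3) i j else 0)) := by
  simp only [Chr, gMat_inv, pd_g]

def dE (t : ℝ) : Fin 4 → Fin 4 → ℝ :=
  ![![0,0,0,0], ![1,0,0,0], ![t,1,0,0], ![0,0,0,0]]

lemma hd_id (t : ℝ) : deriv (fun s : ℝ => s) t = 1 := by
  simpa using (hasDerivAt_id t).deriv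

lemma deriv_eVF (b k : Fin 4) (t : ℝ) (p : Fin 4 → ℝ) :
    deriv (fun s => eVF b (Function.update p 3 s) k) t = dE t b k := by
  fin_cases b <;> fin_cases k <;>
    simp [eVF, dE, hd_id, hd_sq2, Function.update_self, Matrix.vecHead, Matrix.vecTail]

lemma pd_e (i b k : Fin 4) (p : Fin 4 → ℝ) :
    pd i (fun q => eVF b q k) p = if i = 3 then dE (p 3) b k else 0 := by
  by_cases h : i = 3
  · subst h
    simp only [pd, if_pos rfl]
    exact deriv_eVF b k (p 3) p
  · rw [if_neg h]
    have : (fun s => eVF b (Function.update p i s) k) = fun _ => eVF b p k := by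
      funext s
      have h3 : Function.update p i s 3 = p 3 := Function.update_of_ne (Ne.symm h) _ _
      fin_cases b <;> fin_cases k <;> simp [eVF, h3]
    simp only [pd, this]
    exact deriv_const _ _


set_option maxHeartbeats 4000000 in
/-- The covariant derivatives of the frame fields for the Levi-Civita connection of g̃. -/
theorem nil4_connection_on_frame : ∀ p : Fin 4 → ℝ,
    nabla (eVF 0) (eVF 0) p = 0 ∧
    nabla (eVF 0) (eVF 1) p = (1 / 2 : ℝ) • eVF 3 p ∧
    nabla (eVF 0) (eVF 2) p = 0 ∧
    nabla (eVF 0) (eVF 3) p = -(1 / 2 : ℝ) • eVF 1 p ∧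
    nabla (eVF 1) (eVF 0) p = (1 / 2 : ℝ) • eVF 3 p ∧
    nabla (eVF 1) (eVF 1) p = 0 ∧
    nabla (eVF 1) (eVF 2) p = (1 / 2 : ℝ) • eVF 3 p ∧
    nabla (eVF 1) (eVF 3) p = -(1 / 2 : ℝ) • (eVF 0 p + eVF 2 p) ∧
    nabla (eVF 2) (eVF 0) p = 0 ∧
    nabla (eVF 2) (eVF 1) p = (1 / 2 : ℝ) • eVF 3 p ∧
    nabla (eVF 2) (eVF 2) p = 0 ∧
    nabla (eVF 2) (eVF 3) p = -(1 / 2 : ℝ) • eVF 1 p ∧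
    nabla (eVF 3) (eVF 0) p = -(1 / 2 : ℝ) • eVF 1 p ∧
    nabla (eVF 3) (eVF 1) p = (1 / 2 : ℝ) • (eVF 0 p - eVF 2 p) ∧
    nabla (eVF 3) (eVF 2) p = (1 / 2 : ℝ) • eVF 1 p ∧
    nabla (eVF 3) (eVF 3) p = 0 := by
  intro p
  refine ⟨?_,?_,?_,?_,?_,?_,?_,?_,?_,?_,?_,?_,?_,?_,?_,?_⟩ <;>
  · funext k
    fin_cases k <;>
    · simp only [nabla, Fin.sum_univ_four, pd_e, Chr_eq]
      simp [gInvMat, dg, dE, eVF, Matrix.vecHead, Matrix.vecTail]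
      try ring
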